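/- Let H be a real inner product space of finite dimension N ≥ 1, let (Ω,μ) be a probability space, and let (x_t)_{t∈Ω} be a family of vectors in H such that t ↦ ⟨x, x_t⟩ is measurable for every x ∈ H. Assume: (i) Parseval: ∫_Ω ⟨x, x_t⟩^2 dμ(t) = ‖x‖_H^2 for all x ∈ H; (ii) ‖x_t‖_H ≤ β·√N for all t ∈ Ω, where β > 0; (iii) κ-stable phase retrieval for the continuous frame: min(‖f−g‖_H, ‖f+g‖_H) ≤ κ·(∫_Ω (|⟨f, x_t⟩| − |⟨g, x_t⟩|)^2 dμ(t))^{1/2} for all f, g ∈ H, where κ > 0. Suppose M ∈ ℕ and t_1, …, t_M ∈ Ω are such that, for some A, B, C > 0: (iv) A·‖x‖_H^2 ≤ (1/M)·∑_{j=1}^M ⟨x, x_{t_j}⟩^2 ≤ B·‖x‖_H^2 for all x ∈ H, and (v) min(‖f−g‖_H, ‖f+g‖_H) ≤ C·((1/M)·∑_{j=1}^M (|⟨f, x_{t_j}⟩| − |⟨g, x_{t_j}⟩|)^2)^{1/2} for all f, g ∈ H. Then for every x ∈ H, writing y(t) = ⟨x, x_t⟩ for t ∈ Ω: (1) A·∫_Ω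 y(t)^2 dμ(t) ≤ (1/M)·∑_{j=1}^M y(t_j)^2 ≤ B·∫_Ω y(t)^2 dμ(t); and (2) A^{1/2}·B^{−3/2}·C^{−3}·(1+A^{−1}β^2)^{−3/2}·∫_Ω |y(t)| dμ(t) ≤ (1/M)·∑_{j=1}^M |y(t_j)| ≤ B^{1/2}·κ^3·(1+β^2)^{3/2}·∫_Ω |y(t)| dμ(t). -/

import Mathlib

open MeasureTheory Set RealInnerProductSpace


section Helpers
variable {H : Type*} [NormedAddCommGroup H] [InnerProductSpace ℝ H]
  {Ω : Type*} [MeasurableSpace Ω] {μ : Measure Ω} [IsProbabilityMeasure μ]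

private lemma sq_int' {x : Ω → H} (hParseval : ∀ v : H, ∫ t, ⟪v, x t⟫ ^ 2 ∂μ = ‖v‖ ^ 2)
    (w : H) : Integrable (fun t => ⟪w, x t⟫ ^ 2) μ := by
  by_cases hw : w = 0
  · simp only [hw, inner_zero_left]
    simpa using (integrable_const (0:ℝ))
  · by_contra h
    have h2 := hParseval w
    rw [integral_undef h] at h2
    have : ‖w‖ = 0 := by nlinarith [norm_nonneg w]
    exact hw (norm_eq_zero.1 this)

private lemma abs_int' {x : Ω → H} (hmeas : ∀ v : H, Measurable fun t => ⟪v, x t⟫)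
    (hParseval : ∀ v : H, ∫ t, ⟪v, x t⟫ ^ 2 ∂μ = ‖v‖ ^ 2)
    (w : H) : Integrable (fun t => |⟪w, x t⟫|) μ := by
  refine Integrable.mono' ((sq_int' hParseval w).add (integrable_const 1))
    ((hmeas w).abs).aestronglyMeasurable ?_
  filter_upwards with t
  simp only [Pi.add_apply, Real.norm_eq_abs, abs_abs]
  nlinarith [sq_nonneg (|⟪w, x t⟫| - 1), sq_abs ⟪w, x t⟫]

end Helpers

private lemma cube_ge_sq {t : ℝ} (h1 : 1 ≤ t) : t ^ 2 ≤ t ^ 3 := by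
  calc t ^ 2 = t ^ 2 * 1 := (mul_one _).symm
    _ ≤ t ^ 2 * t := mul_le_mul_of_nonneg_left h1 (sq_nonneg t)
    _ = t ^ 3 := by ring

private lemma arith_low (A B C β c cM v : ℝ)
    (hA : 0 < A) (hB : 0 < B) (hC : 0 < C) (hβ : 0 < β)
    (hAB : A ≤ B) (hCB : 1 ≤ C * Real.sqrt B)
    (hc0 : 0 ≤ c) (hcM0 : 0 ≤ cM)
    (h1 : c ≤ v) (h2 : v ≤ 2 * C ^ 2 * β * cM) :
    Real.sqrt A * (Real.sqrt B ^ 3)⁻¹ * (C ^ 3)⁻¹ *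
      (Real.sqrt (1 + A⁻¹ * β ^ 2) ^ 3)⁻¹ * c ≤ cM := by
  have hs1pos : (0:ℝ) < 1 + A⁻¹ * β ^ 2 := by positivity
  set sA := Real.sqrt A with hsA_def
  set sB := Real.sqrt B with hsB_def
  set s1 := Real.sqrt (1 + A⁻¹ * β ^ 2) with hs1_def
  have hsA2 : sA ^ 2 = A := Real.sq_sqrt hA.le
  have hsB2 : sB ^ 2 = B := Real.sq_sqrt hB.le
  have hs12 : s1 ^ 2 = 1 + A⁻¹ * β ^ 2 := Real.sq_sqrt hs1pos.le
  have hsApos : 0 < sA := Real.sqrt_pos.2 hA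
  have hsBpos : 0 < sB := Real.sqrt_pos.2 hB
  have hs1one : 1 ≤ s1 := by
    rw [hs1_def]
    calc (1:ℝ) = Real.sqrt 1 := Real.sqrt_one.symm
      _ ≤ Real.sqrt (1 + A⁻¹ * β ^ 2) := Real.sqrt_le_sqrt (by
          linarith [mul_nonneg (inv_nonneg.2 hA.le) (sq_nonneg β)])
  have hs1nn : (0:ℝ) ≤ s1 := by linarith
  have k1 : 2 * β ≤ s1 ^ 2 * sA := by
    have e1 : s1 ^ 2 * sA ^ 2 = sA ^ 2 + β ^ 2 := by
      rw [hs12, hsA2]; field_simp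
    have e2 : 2 * β * sA ≤ s1 ^ 2 * sA * sA := by
      nlinarith [sq_nonneg (sA - β)]
    exact le_of_mul_le_mul_right e2 hsApos
  have k3 : C ^ 2 * B ≤ C ^ 3 * sB ^ 3 := by
    calc C ^ 2 * B = (C * sB) ^ 2 := by rw [mul_pow, hsB2]
      _ ≤ (C * sB) ^ 3 := cube_ge_sq hCB
      _ = C ^ 3 * sB ^ 3 := by ring
  have hKkey : sA * (2 * C ^ 2 * β) ≤ sB ^ 3 * C ^ 3 * s1 ^ 3 := by
    have s13 : s1 ^ 2 ≤ s1 ^ 3 := cube_ge_sq hs1one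
    have step2 : sA * (2 * C ^ 2 * β) ≤ C ^ 2 * A * s1 ^ 2 := by
      have e2 : A * s1 ^ 2 = sA * (s1 ^ 2 * sA) := by rw [← hsA2]; ring
      have t3 : sA * (2 * β) ≤ sA * (s1 ^ 2 * sA) :=
        mul_le_mul_of_nonneg_left k1 hsApos.le
      calc sA * (2 * C ^ 2 * β) = C ^ 2 * (sA * (2 * β)) := by ring
        _ ≤ C ^ 2 * (sA * (s1 ^ 2 * sA)) := mul_le_mul_of_nonneg_left t3 (sq_nonneg C)
        _ = C ^ 2 * (A * s1 ^ 2) := by rw [e2]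
        _ = C ^ 2 * A * s1 ^ 2 := by ring
    have step3 : C ^ 2 * A * s1 ^ 2 ≤ C ^ 2 * B * s1 ^ 2 :=
      mul_le_mul_of_nonneg_right (mul_le_mul_of_nonneg_left hAB (sq_nonneg C)) (sq_nonneg s1)
    have step1 : C ^ 2 * B * s1 ^ 2 ≤ C ^ 3 * sB ^ 3 * s1 ^ 3 := by
      have t1 : C ^ 2 * B * s1 ^ 2 ≤ C ^ 2 * B * s1 ^ 3 := by
        refine mul_le_mul_of_nonneg_left s13 ?_
        positivity
      have t2 : C ^ 2 * B * s1 ^ 3 ≤ C ^ 3 * sB ^ 3 * s1 ^ 3 :=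
        mul_le_mul_of_nonneg_right k3 (by positivity)
      linarith
    calc sA * (2 * C ^ 2 * β) ≤ C ^ 2 * A * s1 ^ 2 := step2
      _ ≤ C ^ 2 * B * s1 ^ 2 := step3
      _ ≤ C ^ 3 * sB ^ 3 * s1 ^ 3 := step1
      _ = sB ^ 3 * C ^ 3 * s1 ^ 3 := by ring
  have hP : (0:ℝ) < sB ^ 3 * C ^ 3 * s1 ^ 3 := by positivity
  have hfinal : sA * c ≤ (sB ^ 3 * C ^ 3 * s1 ^ 3) * cM := by
    have b1 : sA * c ≤ sA * v := mul_le_mul_of_nonneg_left h1 hsApos.le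
    have b2 : sA * v ≤ sA * (2 * C ^ 2 * β * cM) := mul_le_mul_of_nonneg_left h2 hsApos.le
    have b3 : sA * (2 * C ^ 2 * β) * cM ≤ (sB ^ 3 * C ^ 3 * s1 ^ 3) * cM :=
      mul_le_mul_of_nonneg_right hKkey hcM0
    calc sA * c ≤ sA * (2 * C ^ 2 * β * cM) := le_trans b1 b2
      _ = sA * (2 * C ^ 2 * β) * cM := by ring
      _ ≤ (sB ^ 3 * C ^ 3 * s1 ^ 3) * cM := b3
  calc sA * (sB ^ 3)⁻¹ * (C ^ 3)⁻¹ * (s1 ^ 3)⁻¹ * c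
      = (sA * c) / (sB ^ 3 * C ^ 3 * s1 ^ 3) := by field_simp
    _ ≤ cM := by
        rw [div_le_iff₀ hP]
        linarith [hfinal]

private lemma arith_up (B κ β c cM v : ℝ)
    (hB : 0 < B) (hκ : 0 < κ) (hβ : 0 < β) (hκ1 : 1 ≤ κ)
    (hc0 : 0 ≤ c) (hdisc : cM ≤ Real.sqrt B * v) (hcont : v ≤ 2 * κ ^ 2 * β * c) :
    cM ≤ Real.sqrt B * κ ^ 3 * Real.sqrt (1 + β ^ 2) ^ 3 * c := by
  have hs2pos : (0:ℝ) < 1 + β ^ 2 := by positivity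
  set sB := Real.sqrt B with hsB_def
  set s2 := Real.sqrt (1 + β ^ 2) with hs2_def
  have hs22 : s2 ^ 2 = 1 + β ^ 2 := Real.sq_sqrt hs2pos.le
  have hsBpos : 0 < sB := Real.sqrt_pos.2 hB
  have hs2one : 1 ≤ s2 := by
    rw [hs2_def]
    calc (1:ℝ) = Real.sqrt 1 := Real.sqrt_one.symm
      _ ≤ Real.sqrt (1 + β ^ 2) := Real.sqrt_le_sqrt (by linarith [sq_nonneg β])
  have k2 : 2 * β ≤ s2 ^ 2 := by rw [hs22]; nlinarith [sq_nonneg (β - 1)]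
  have u2 : 2 * β ≤ s2 ^ 3 := le_trans k2 (cube_ge_sq hs2one)
  have u3 : κ ^ 2 ≤ κ ^ 3 := cube_ge_sq hκ1
  have hkey2 : 2 * κ ^ 2 * β ≤ κ ^ 3 * s2 ^ 3 := by
    calc 2 * κ ^ 2 * β = κ ^ 2 * (2 * β) := by ring
      _ ≤ κ ^ 2 * s2 ^ 3 := mul_le_mul_of_nonneg_left u2 (sq_nonneg κ)
      _ ≤ κ ^ 3 * s2 ^ 3 := mul_le_mul_of_nonneg_right u3 (by positivity)
  calc cM ≤ sB * v := hdisc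
    _ ≤ sB * (2 * κ ^ 2 * β * c) := mul_le_mul_of_nonneg_left hcont hsBpos.le
    _ = (2 * κ ^ 2 * β) * (sB * c) := by ring
    _ ≤ (κ ^ 3 * s2 ^ 3) * (sB * c) :=
        mul_le_mul_of_nonneg_right hkey2 (by positivity)
    _ = sB * κ ^ 3 * s2 ^ 3 * c := by ring

private lemma abs_add_sub_sq (a b : ℝ) :
    (|a + b| - |a - b|) ^ 2 = 4 * min (a ^ 2) (b ^ 2) := by
  have h : |a + b| * |a - b| = |a ^ 2 - b ^ 2| := by
    rw [← abs_mul]; congr 1; ring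
  rcases le_total (a ^ 2) (b ^ 2) with h1 | h1
  · rw [show |a ^ 2 - b ^ 2| = -(a ^ 2 - b ^ 2) from abs_of_nonpos (by linarith)] at h
    rw [min_eq_left h1]
    nlinarith [sq_abs (a + b), sq_abs (a - b)]
  · rw [show |a ^ 2 - b ^ 2| = a ^ 2 - b ^ 2 from abs_of_nonneg (by linarith)] at h
    rw [min_eq_right h1]
    nlinarith [sq_abs (a + b), sq_abs (a - b)]

private lemma onb_sum_sq {ι H : Type*} [NormedAddCommGroup H] [InnerProductSpace ℝ H]
    [Fintype ι] (b : OrthonormalBasis ι ℝ H) (w : H) :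
    ∑ i, ⟪b i, w⟫ ^ 2 = ‖w‖ ^ 2 := by
  calc ∑ i, ⟪b i, w⟫ ^ 2 = ∑ i, ⟪w, b i⟫ * ⟪b i, w⟫ := by
        refine Finset.sum_congr rfl fun i _ => ?_
        rw [sq, real_inner_comm (b i) w]
    _ = ⟪w, w⟫ := b.sum_inner_mul_inner w w
    _ = ‖w‖ ^ 2 := real_inner_self_eq_norm_sq w

private lemma cont_key {H : Type*} [NormedAddCommGroup H] [InnerProductSpace ℝ H]
    (N : ℕ) (hN : 1 ≤ N) (hdim : Module.finrank ℝ H = N)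
    {Ω : Type*} [MeasurableSpace Ω] (μ : Measure Ω) [IsProbabilityMeasure μ]
    (x : Ω → H) (hmeas : ∀ v : H, Measurable fun t => ⟪v, x t⟫)
    (β κ : ℝ) (hβ : 0 < β) (hκ : 0 < κ)
    (hParseval : ∀ v : H, ∫ t, ⟪v, x t⟫ ^ 2 ∂μ = ‖v‖ ^ 2)
    (hbd : ∀ t : Ω, ‖x t‖ ≤ β * Real.sqrt N)
    (hspr : ∀ f g : H, min ‖f - g‖ ‖f + g‖ ≤
      κ * (∫ t, (|⟪f, x t⟫| - |⟪g, x t⟫|) ^ 2 ∂μ) ^ ((1 : ℝ) / 2))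
    (f : H) : ‖f‖ ≤ 2 * κ ^ 2 * β * ∫ t, |⟪f, x t⟫| ∂μ := by
  haveI : FiniteDimensional ℝ H := FiniteDimensional.of_finrank_pos (hdim ▸ hN)
  -- integrability of squares
  have hzint : ∀ w : H, Integrable (fun t => ⟪w, x t⟫ ^ 2) μ := by
    intro w
    by_cases hw : w = 0
    · simp only [hw, inner_zero_left]
      simpa using (integrable_const (0:ℝ))
    · by_contra h
      have h2 := hParseval w
      rw [integral_undef h] at h2
      have : ‖w‖ = 0 := by nlinarith [norm_nonneg w]
      exact hw (norm_eq_zero.1 this)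
  have habsint : ∀ w : H, Integrable (fun t => |⟪w, x t⟫|) μ := by
    intro w
    refine Integrable.mono' ((hzint w).add (integrable_const 1))
      ((hmeas w).abs).aestronglyMeasurable ?_
    filter_upwards with t
    simp only [Pi.add_apply, Real.norm_eq_abs, abs_abs]
    nlinarith [sq_nonneg (|⟪w, x t⟫| - 1), sq_abs ⟪w, x t⟫]
  -- main claim for unit vectors
  have key : ∀ f : H, ‖f‖ = 1 → 1 ≤ 2 * κ ^ 2 * β * ∫ t, |⟪f, x t⟫| ∂μ := by
    intro f hf
    set y : Ω → ℝ := fun t => ⟪f, x t⟫ with hy_def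
    have hy : Measurable y := hmeas f
    set c : ℝ := ∫ t, |y t| ∂μ with hc_def
    have hc0 : 0 ≤ c := integral_nonneg fun t => abs_nonneg _
    set E : Set Ω := {t | β < |y t|} with hE_def
    have hEm : MeasurableSet E := measurableSet_lt measurable_const hy.abs
    -- Chebyshev
    have hcheb : β * (μ E).toReal ≤ c := by
      have h1 : ∫ _ in E, β ∂μ ≤ ∫ t in E, |y t| ∂μ := by
        refine setIntegral_mono_on (integrableOn_const (measure_lt_top μ E).ne)
          (habsint f).integrableOn hEm (fun t ht => le_of_lt ht)
      have h2 : ∫ t in E, |y t| ∂μ ≤ c :=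
        setIntegral_le_integral (habsint f) (Filter.Eventually.of_forall fun t => abs_nonneg _)
      rw [setIntegral_const, smul_eq_mul, mul_comm] at h1
      have h1' : β * (μ E).toReal ≤ ∫ t in E, |y t| ∂μ := h1
      linarith
    -- pigeonhole over an orthonormal basis
    let b := (stdOrthonormalBasis ℝ H).reindex (finCongr hdim)
    have hbnorm : ∀ i, ‖b i‖ = 1 := fun i => b.orthonormal.1 i
    have hsum_eq : ∑ i, ∫ t in E, ⟪b i, x t⟫ ^ 2 ∂μ = ∫ t in E, ‖x t‖ ^ 2 ∂μ := by
      rw [← integral_finset_sum _ (fun i _ => (hzint (b i)).integrableOn)]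
      exact setIntegral_congr_fun hEm fun t _ => onb_sum_sq b (x t)
    have hnormsq_meas : Measurable fun t => ‖x t‖ ^ 2 := by
      have : (fun t => ‖x t‖ ^ 2) = fun t => ∑ i, ⟪b i, x t⟫ ^ 2 := by
        funext t; exact (onb_sum_sq b (x t)).symm
      rw [this]
      exact Finset.measurable_sum _ fun i _ => (hmeas (b i)).pow_const 2
    have hnormsq_bd : ∀ t, ‖x t‖ ^ 2 ≤ β ^ 2 * N := by
      intro t
      have := hbd t
      have h2 : (β * Real.sqrt N) ^ 2 = β ^ 2 * N := by
        rw [mul_pow, Real.sq_sqrt (Nat.cast_nonneg N)]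
      nlinarith [norm_nonneg (x t)]
    have hsum_le : ∑ i, ∫ t in E, ⟪b i, x t⟫ ^ 2 ∂μ ≤ β ^ 2 * N * (μ E).toReal := by
      rw [hsum_eq]
      have h1 : ∫ t in E, ‖x t‖ ^ 2 ∂μ ≤ ∫ _ in E, β ^ 2 * N ∂μ := by
        have hcint : IntegrableOn (fun _ : Ω => β ^ 2 * (N:ℝ)) E μ :=
          integrableOn_const (measure_lt_top μ E).ne
        have hnint : IntegrableOn (fun t => ‖x t‖ ^ 2) E μ := by
          refine Integrable.mono' hcint hnormsq_meas.aestronglyMeasurable ?_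
          filter_upwards with t
          rw [Real.norm_eq_abs, abs_of_nonneg (sq_nonneg _)]
          exact hnormsq_bd t
        exact setIntegral_mono_on hnint hcint hEm (fun t _ => hnormsq_bd t)
      rw [setIntegral_const, smul_eq_mul, mul_comm] at h1
      have h1' : ∫ t in E, ‖x t‖ ^ 2 ∂μ ≤ β ^ 2 * N * (μ E).toReal := h1
      linarith
    obtain ⟨i, -, hi⟩ : ∃ i ∈ Finset.univ, ∫ t in E, ⟪b i, x t⟫ ^ 2 ∂μ ≤ β ^ 2 * (μ E).toReal := by
      haveI : Nonempty (Fin N) := ⟨⟨0, hN⟩⟩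
      apply Finset.exists_le_of_sum_le Finset.univ_nonempty
      rw [Finset.sum_const, Finset.card_univ, Fintype.card_fin, nsmul_eq_mul]
      calc ∑ i, ∫ t in E, ⟪b i, x t⟫ ^ 2 ∂μ ≤ β ^ 2 * N * (μ E).toReal := hsum_le
        _ = N * (β ^ 2 * (μ E).toReal) := by ring
    set g : H := b i with hg_def
    set z : Ω → ℝ := fun t => ⟪g, x t⟫ with hz_def
    -- apply stable phase retrieval to f + g and f - g
    have happ := hspr (f + g) (f - g)
    have e1 : (f + g) - (f - g) = (2:ℝ) • g := by
      rw [two_smul]; abel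
    have e2 : (f + g) + (f - g) = (2:ℝ) • f := by
      rw [two_smul]; abel
    rw [e1, e2] at happ
    have hlhs : min ‖(2:ℝ) • g‖ ‖(2:ℝ) • f‖ = 2 := by
      rw [norm_smul, norm_smul, hf, hbnorm i]; norm_num
    rw [hlhs] at happ
    -- rewrite the integrand
    have hfun : (fun t => (|⟪f + g, x t⟫| - |⟪f - g, x t⟫|) ^ 2)
        = fun t => 4 * min (y t ^ 2) (z t ^ 2) := by
      funext t
      rw [inner_add_left, inner_sub_left]
      exact abs_add_sub_sq (y t) (z t)
    rw [hfun] at happ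
    -- bound the integral
    have hmin_meas : Measurable fun t => min (y t ^ 2) (z t ^ 2) :=
      (hy.pow_const 2).min ((hmeas g).pow_const 2)
    have hmin_int : Integrable (fun t => min (y t ^ 2) (z t ^ 2)) μ := by
      refine Integrable.mono' (hzint f) hmin_meas.aestronglyMeasurable ?_
      filter_upwards with t
      rw [Real.norm_eq_abs, abs_of_nonneg (le_min (sq_nonneg _) (sq_nonneg _))]
      exact min_le_left _ _
    have hsmall : ∫ t in Eᶜ, y t ^ 2 ∂μ ≤ β * c := by
      have h1 : ∫ t in Eᶜ, y t ^ 2 ∂μ ≤ ∫ t in Eᶜ, β * |y t| ∂μ := by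
        refine setIntegral_mono_on (hzint f).integrableOn
          ((habsint f).const_mul β).integrableOn hEm.compl ?_
        intro t ht
        have : |y t| ≤ β := by
          simp only [hE_def, Set.mem_compl_iff, Set.mem_setOf_eq, not_lt] at ht
          exact ht
        nlinarith [abs_nonneg (y t), sq_abs (y t)]
      have h2 : ∫ t in Eᶜ, β * |y t| ∂μ = β * ∫ t in Eᶜ, |y t| ∂μ := integral_const_mul β _
      have h3 : ∫ t in Eᶜ, |y t| ∂μ ≤ c :=
        setIntegral_le_integral (habsint f) (Filter.Eventually.of_forall fun t => abs_nonneg _)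
      calc ∫ t in Eᶜ, y t ^ 2 ∂μ ≤ β * ∫ t in Eᶜ, |y t| ∂μ := by rw [← h2]; exact h1
        _ ≤ β * c := by exact mul_le_mul_of_nonneg_left h3 hβ.le
    have hbig : ∫ t in E, z t ^ 2 ∂μ ≤ β * c := by
      calc ∫ t in E, z t ^ 2 ∂μ ≤ β ^ 2 * (μ E).toReal := hi
        _ = β * (β * (μ E).toReal) := by ring
        _ ≤ β * c := mul_le_mul_of_nonneg_left hcheb hβ.le
    have hminsplit : ∫ t, min (y t ^ 2) (z t ^ 2) ∂μ ≤ 2 * (β * c) := by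
      have hb1 : ∫ t, min (y t ^ 2) (z t ^ 2) ∂μ
          ≤ ∫ t, (E.indicator (fun t => z t ^ 2) t + Eᶜ.indicator (fun t => y t ^ 2) t) ∂μ := by
        refine integral_mono hmin_int ?_ ?_
        · exact ((hzint g).indicator hEm).add ((hzint f).indicator hEm.compl)
        · intro t
          by_cases ht : t ∈ E
          · simp only [Set.indicator_of_mem ht,
              Set.indicator_of_notMem (show t ∉ Eᶜ by simpa using ht), add_zero]
            exact min_le_right _ _
          · simp only [Set.indicator_of_notMem ht,
              Set.indicator_of_mem (show t ∈ Eᶜ by simpa using ht), zero_add]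
            exact min_le_left _ _
      rw [integral_add ((hzint g).indicator hEm) ((hzint f).indicator hEm.compl),
        integral_indicator hEm, integral_indicator hEm.compl] at hb1
      linarith
    -- finish
    have hQ : ∫ t, 4 * min (y t ^ 2) (z t ^ 2) ∂μ ≤ 8 * (β * c) := by
      rw [integral_const_mul]
      linarith
    have hQ0 : 0 ≤ ∫ t, 4 * min (y t ^ 2) (z t ^ 2) ∂μ :=
      integral_nonneg fun t => by positivity
    rw [← Real.sqrt_eq_rpow] at happ
    have hs1 : Real.sqrt (∫ t, 4 * min (y t ^ 2) (z t ^ 2) ∂μ) ≤ Real.sqrt (8 * (β * c)) :=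
      Real.sqrt_le_sqrt hQ
    have h2 : 2 ≤ κ * Real.sqrt (8 * (β * c)) := by
      calc (2:ℝ) ≤ κ * Real.sqrt (∫ t, 4 * min (y t ^ 2) (z t ^ 2) ∂μ) := happ
        _ ≤ κ * Real.sqrt (8 * (β * c)) := mul_le_mul_of_nonneg_left hs1 hκ.le
    have hsq := Real.sq_sqrt (show (0:ℝ) ≤ 8 * (β * c) by positivity)
    have h3 : (2:ℝ) ^ 2 ≤ (κ * Real.sqrt (8 * (β * c))) ^ 2 :=
      pow_le_pow_left₀ (by norm_num) h2 2
    rw [mul_pow, hsq] at h3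
    nlinarith [h3]
  -- deduce general case
  by_cases hf0 : f = 0
  · simp [hf0]
  · have hfn : 0 < ‖f‖ := norm_pos_iff.2 hf0
    have hu : ‖(‖f‖⁻¹ • f)‖ = 1 := norm_smul_inv_norm hf0
    have h1 := key (‖f‖⁻¹ • f) hu
    have h2 : ∫ t, |⟪‖f‖⁻¹ • f, x t⟫| ∂μ = ‖f‖⁻¹ * ∫ t, |⟪f, x t⟫| ∂μ := by
      rw [← integral_const_mul]
      congr 1; funext t
      rw [real_inner_smul_left, abs_mul, abs_of_nonneg (inv_nonneg.2 hfn.le)]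
    rw [h2] at h1
    have h3 : ‖f‖ * 1 ≤ ‖f‖ * (2 * κ ^ 2 * β * (‖f‖⁻¹ * ∫ t, |⟪f, x t⟫| ∂μ)) :=
      mul_le_mul_of_nonneg_left h1 hfn.le
    rw [mul_one] at h3
    calc ‖f‖ ≤ ‖f‖ * (2 * κ ^ 2 * β * (‖f‖⁻¹ * ∫ t, |⟪f, x t⟫| ∂μ)) := h3
      _ = (‖f‖ * ‖f‖⁻¹) * (2 * κ ^ 2 * β * ∫ t, |⟪f, x t⟫| ∂μ) := by ring
      _ = 2 * κ ^ 2 * β * ∫ t, |⟪f, x t⟫| ∂μ := by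
          rw [mul_inv_cancel₀ hfn.ne', one_mul]
private lemma disc_key {H : Type*} [NormedAddCommGroup H] [InnerProductSpace ℝ H]
    (N : ℕ) (hN : 1 ≤ N) (hdim : Module.finrank ℝ H = N)
    (M : ℕ) (hM : 0 < M) (u : Fin M → H)
    (β C : ℝ) (hβ : 0 < β) (hC : 0 < C)
    (hbd : ∀ j, ‖u j‖ ≤ β * Real.sqrt N)
    (hspr : ∀ f g : H, min ‖f - g‖ ‖f + g‖ ≤
      C * ((1 / M : ℝ) * ∑ j, (|⟪f, u j⟫| - |⟪g, u j⟫|) ^ 2) ^ ((1 : ℝ) / 2))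
    (f : H) : ‖f‖ ≤ 2 * C ^ 2 * β * ((1 / M : ℝ) * ∑ j, |⟪f, u j⟫|) := by
  haveI : FiniteDimensional ℝ H := FiniteDimensional.of_finrank_pos (hdim ▸ hN)
  have hM0 : (0:ℝ) < (M:ℝ) := by exact_mod_cast hM
  have key : ∀ f : H, ‖f‖ = 1 → 1 ≤ 2 * C ^ 2 * β * ((1 / M : ℝ) * ∑ j, |⟪f, u j⟫|) := by
    intro f hf
    set y : Fin M → ℝ := fun j => ⟪f, u j⟫ with hy_def
    set c : ℝ := (1 / M : ℝ) * ∑ j, |y j| with hc_def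
    have hc0 : 0 ≤ c := by
      apply mul_nonneg (by positivity)
      exact Finset.sum_nonneg fun j _ => abs_nonneg _
    set E : Finset (Fin M) := Finset.univ.filter (fun j => β < |y j|) with hE_def
    -- Chebyshev
    have hcheb : β * (E.card : ℝ) ≤ (M:ℝ) * c := by
      have h1 : β * (E.card : ℝ) ≤ ∑ j ∈ E, |y j| := by
        rw [mul_comm]
        calc (E.card : ℝ) * β = ∑ _j ∈ E, β := by rw [Finset.sum_const, nsmul_eq_mul]
          _ ≤ ∑ j ∈ E, |y j| := Finset.sum_le_sum fun j hj =>
              le_of_lt (Finset.mem_filter.1 hj).2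
      have h2 : ∑ j ∈ E, |y j| ≤ ∑ j, |y j| :=
        Finset.sum_le_sum_of_subset_of_nonneg (Finset.filter_subset _ _)
          (fun j _ _ => abs_nonneg _)
      have h3 : (M:ℝ) * c = ∑ j, |y j| := by
        rw [hc_def]; field_simp
      linarith
    -- pigeonhole
    let b := (stdOrthonormalBasis ℝ H).reindex (finCongr hdim)
    have hbnorm : ∀ i, ‖b i‖ = 1 := fun i => b.orthonormal.1 i
    have hsum_le : ∑ i, ∑ j ∈ E, ⟪b i, u j⟫ ^ 2 ≤ β ^ 2 * N * (E.card : ℝ) := by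
      rw [Finset.sum_comm]
      have h1 : ∀ j, ∑ i, ⟪b i, u j⟫ ^ 2 ≤ β ^ 2 * N := by
        intro j
        rw [onb_sum_sq b (u j)]
        have h2 : (β * Real.sqrt N) ^ 2 = β ^ 2 * N := by
          rw [mul_pow, Real.sq_sqrt (Nat.cast_nonneg N)]
        nlinarith [norm_nonneg (u j), hbd j]
      calc ∑ j ∈ E, ∑ i, ⟪b i, u j⟫ ^ 2 ≤ ∑ _j ∈ E, β ^ 2 * (N:ℝ) :=
            Finset.sum_le_sum fun j _ => h1 j
        _ = β ^ 2 * N * (E.card : ℝ) := by rw [Finset.sum_const, nsmul_eq_mul]; ring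
    obtain ⟨i, -, hi⟩ : ∃ i ∈ Finset.univ, ∑ j ∈ E, ⟪b i, u j⟫ ^ 2 ≤ β ^ 2 * (E.card : ℝ) := by
      haveI : Nonempty (Fin N) := ⟨⟨0, hN⟩⟩
      apply Finset.exists_le_of_sum_le Finset.univ_nonempty
      rw [Finset.sum_const, Finset.card_univ, Fintype.card_fin, nsmul_eq_mul]
      calc ∑ i, ∑ j ∈ E, ⟪b i, u j⟫ ^ 2 ≤ β ^ 2 * N * (E.card : ℝ) := hsum_le
        _ = N * (β ^ 2 * (E.card : ℝ)) := by ring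
    set g : H := b i with hg_def
    set z : Fin M → ℝ := fun j => ⟪g, u j⟫ with hz_def
    have happ := hspr (f + g) (f - g)
    have e1 : (f + g) - (f - g) = (2:ℝ) • g := by rw [two_smul]; abel
    have e2 : (f + g) + (f - g) = (2:ℝ) • f := by rw [two_smul]; abel
    rw [e1, e2] at happ
    have hlhs : min ‖(2:ℝ) • g‖ ‖(2:ℝ) • f‖ = 2 := by
      rw [norm_smul, norm_smul, hf, hbnorm i]; norm_num
    rw [hlhs] at happ
    have hfun : ∀ j, (|⟪f + g, u j⟫| - |⟪f - g, u j⟫|) ^ 2 = 4 * min (y j ^ 2) (z j ^ 2) := by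
      intro j
      rw [inner_add_left, inner_sub_left]
      exact abs_add_sub_sq (y j) (z j)
    have hsplit : ∑ j, (|⟪f + g, u j⟫| - |⟪f - g, u j⟫|) ^ 2 ≤ 8 * β * ((M:ℝ) * c) := by
      have h1 : ∑ j, (|⟪f + g, u j⟫| - |⟪f - g, u j⟫|) ^ 2
          = 4 * ∑ j, min (y j ^ 2) (z j ^ 2) := by
        rw [Finset.mul_sum]
        exact Finset.sum_congr rfl fun j _ => hfun j
      have h2 : ∑ j, min (y j ^ 2) (z j ^ 2)
          = ∑ j ∈ E, min (y j ^ 2) (z j ^ 2) + ∑ j ∈ Eᶜ, min (y j ^ 2) (z j ^ 2) :=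
        (Finset.sum_add_sum_compl E _).symm
      have h3 : ∑ j ∈ E, min (y j ^ 2) (z j ^ 2) ≤ β * ((M:ℝ) * c) := by
        calc ∑ j ∈ E, min (y j ^ 2) (z j ^ 2) ≤ ∑ j ∈ E, z j ^ 2 :=
              Finset.sum_le_sum fun j _ => min_le_right _ _
          _ ≤ β ^ 2 * (E.card : ℝ) := hi
          _ = β * (β * (E.card : ℝ)) := by ring
          _ ≤ β * ((M:ℝ) * c) := mul_le_mul_of_nonneg_left hcheb hβ.le
      have h4 : ∑ j ∈ Eᶜ, min (y j ^ 2) (z j ^ 2) ≤ β * ((M:ℝ) * c) := by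
          have hMc : ∑ j, |y j| = (M:ℝ) * c := by rw [hc_def]; field_simp
          calc ∑ j ∈ Eᶜ, min (y j ^ 2) (z j ^ 2) ≤ ∑ j ∈ Eᶜ, β * |y j| := by
                refine Finset.sum_le_sum fun j hj => ?_
                have hj2 : |y j| ≤ β := by
                  have := Finset.mem_compl.1 hj
                  simp only [hE_def, Finset.mem_filter, Finset.mem_univ, true_and, not_lt] at this
                  exact this
                calc min (y j ^ 2) (z j ^ 2) ≤ y j ^ 2 := min_le_left _ _
                  _ ≤ β * |y j| := by nlinarith [abs_nonneg (y j), sq_abs (y j)]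
            _ ≤ β * ∑ j, |y j| := by
                rw [← Finset.mul_sum]
                refine mul_le_mul_of_nonneg_left ?_ hβ.le
                exact Finset.sum_le_sum_of_subset_of_nonneg (Finset.subset_univ _)
                  (fun j _ _ => abs_nonneg _)
            _ = β * ((M:ℝ) * c) := by rw [hMc]
      rw [h1, h2]
      linarith
    -- conclude
    have hQle : (1 / M : ℝ) * ∑ j, (|⟪f + g, u j⟫| - |⟪f - g, u j⟫|) ^ 2 ≤ 8 * (β * c) := by
      have := mul_le_mul_of_nonneg_left hsplit (le_of_lt (by positivity : (0:ℝ) < 1 / (M:ℝ)))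
      calc (1 / M : ℝ) * ∑ j, (|⟪f + g, u j⟫| - |⟪f - g, u j⟫|) ^ 2
          ≤ (1 / M : ℝ) * (8 * β * ((M:ℝ) * c)) := this
        _ = 8 * (β * c) := by field_simp
    have hQ0 : 0 ≤ (1 / M : ℝ) * ∑ j, (|⟪f + g, u j⟫| - |⟪f - g, u j⟫|) ^ 2 := by
      apply mul_nonneg (by positivity)
      exact Finset.sum_nonneg fun j _ => sq_nonneg _
    rw [← Real.sqrt_eq_rpow] at happ
    have hs1 := Real.sqrt_le_sqrt hQle
    have h2 : 2 ≤ C * Real.sqrt (8 * (β * c)) := by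
      calc (2:ℝ) ≤ C * Real.sqrt ((1 / M : ℝ) * ∑ j, (|⟪f + g, u j⟫| - |⟪f - g, u j⟫|) ^ 2) := happ
        _ ≤ C * Real.sqrt (8 * (β * c)) := mul_le_mul_of_nonneg_left hs1 hC.le
    have hsq := Real.sq_sqrt (show (0:ℝ) ≤ 8 * (β * c) by positivity)
    have h3 : (2:ℝ) ^ 2 ≤ (C * Real.sqrt (8 * (β * c))) ^ 2 :=
      pow_le_pow_left₀ (by norm_num) h2 2
    rw [mul_pow, hsq] at h3
    nlinarith [h3]
  by_cases hf0 : f = 0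
  · simp [hf0]
  · have hfn : 0 < ‖f‖ := norm_pos_iff.2 hf0
    have hu : ‖(‖f‖⁻¹ • f)‖ = 1 := norm_smul_inv_norm hf0
    have h1 := key (‖f‖⁻¹ • f) hu
    have h2 : ((1 / M : ℝ) * ∑ j, |⟪‖f‖⁻¹ • f, u j⟫|)
        = ‖f‖⁻¹ * ((1 / M : ℝ) * ∑ j, |⟪f, u j⟫|) := by
      simp only [real_inner_smul_left, abs_mul, abs_of_nonneg (inv_nonneg.2 hfn.le)]
      rw [← Finset.mul_sum]; ring
    rw [h2] at h1
    have h3 : ‖f‖ * 1 ≤ ‖f‖ * (2 * C ^ 2 * β * (‖f‖⁻¹ * ((1 / M : ℝ) * ∑ j, |⟪f, u j⟫|))) :=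
      mul_le_mul_of_nonneg_left h1 hfn.le
    rw [mul_one] at h3
    calc ‖f‖ ≤ ‖f‖ * (2 * C ^ 2 * β * (‖f‖⁻¹ * ((1 / M : ℝ) * ∑ j, |⟪f, u j⟫|))) := h3
      _ = (‖f‖ * ‖f‖⁻¹) * (2 * C ^ 2 * β * ((1 / M : ℝ) * ∑ j, |⟪f, u j⟫|)) := by ring
      _ = 2 * C ^ 2 * β * ((1 / M : ℝ) * ∑ j, |⟪f, u j⟫|) := by
          rw [mul_inv_cancel₀ hfn.ne', one_mul]

set_option maxHeartbeats 1600000 in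
theorem stmt15 {H : Type*} [NormedAddCommGroup H] [InnerProductSpace ℝ H]
    (N : ℕ) (hN : 1 ≤ N) (hdim : Module.finrank ℝ H = N)
    {Ω : Type*} [MeasurableSpace Ω] (μ : Measure Ω) [IsProbabilityMeasure μ]
    (x : Ω → H) (hmeas : ∀ v : H, Measurable fun t => ⟪v, x t⟫)
    (β κ : ℝ) (hβ : 0 < β) (hκ : 0 < κ)
    (hParseval : ∀ v : H, ∫ t, ⟪v, x t⟫ ^ 2 ∂μ = ‖v‖ ^ 2)
    (hbd : ∀ t : Ω, ‖x t‖ ≤ β * Real.sqrt N)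
    (hspr : ∀ f g : H, min ‖f - g‖ ‖f + g‖ ≤
      κ * (∫ t, (|⟪f, x t⟫| - |⟪g, x t⟫|) ^ 2 ∂μ) ^ ((1 : ℝ) / 2))
    (M : ℕ) (ts : Fin M → Ω) (A B C : ℝ) (hA : 0 < A) (hB : 0 < B) (hC : 0 < C)
    (hframe : ∀ v : H, A * ‖v‖ ^ 2 ≤ (1 / M : ℝ) * ∑ j, ⟪v, x (ts j)⟫ ^ 2 ∧
      (1 / M : ℝ) * ∑ j, ⟪v, x (ts j)⟫ ^ 2 ≤ B * ‖v‖ ^ 2)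
    (hsprM : ∀ f g : H, min ‖f - g‖ ‖f + g‖ ≤
      C * ((1 / M : ℝ) * ∑ j, (|⟪f, x (ts j)⟫| - |⟪g, x (ts j)⟫|) ^ 2) ^ ((1 : ℝ) / 2)) :
    ∀ v : H,
      (A * ∫ t, ⟪v, x t⟫ ^ 2 ∂μ ≤ (1 / M : ℝ) * ∑ j, ⟪v, x (ts j)⟫ ^ 2 ∧
        (1 / M : ℝ) * ∑ j, ⟪v, x (ts j)⟫ ^ 2 ≤ B * ∫ t, ⟪v, x t⟫ ^ 2 ∂μ) ∧
      (A ^ ((1 : ℝ) / 2) * B ^ (-(3 : ℝ) / 2) * C ^ (-(3 : ℝ)) *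
            (1 + A⁻¹ * β ^ 2) ^ (-(3 : ℝ) / 2) * ∫ t, |⟪v, x t⟫| ∂μ ≤
          (1 / M : ℝ) * ∑ j, |⟪v, x (ts j)⟫| ∧
        (1 / M : ℝ) * ∑ j, |⟪v, x (ts j)⟫| ≤
          B ^ ((1 : ℝ) / 2) * κ ^ 3 * (1 + β ^ 2) ^ ((3 : ℝ) / 2) * ∫ t, |⟪v, x t⟫| ∂μ) := by
  haveI : FiniteDimensional ℝ H := FiniteDimensional.of_finrank_pos (hdim ▸ hN)
  obtain ⟨e0, he0⟩ : ∃ e : H, ‖e‖ = 1 := by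
    let b := (stdOrthonormalBasis ℝ H).reindex (finCongr hdim)
    exact ⟨b ⟨0, hN⟩, b.orthonormal.1 _⟩
  -- M is positive
  have hM : 0 < M := by
    rcases Nat.eq_zero_or_pos M with h0 | h
    · exfalso
      have h1 := (hframe e0).1
      rw [he0] at h1
      subst h0
      simp only [Nat.cast_zero, div_zero, Finset.univ_eq_empty, Finset.sum_empty,
        mul_zero, zero_mul, one_pow, mul_one] at h1
      linarith
    · exact h
  have hM0 : (0:ℝ) < (M:ℝ) := by exact_mod_cast hM
  -- kappa at least one
  have hκ1 : 1 ≤ κ := by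
    have h := hspr e0 0
    simp only [sub_zero, add_zero, min_self, inner_zero_left, abs_zero, sq_abs] at h
    rw [hParseval e0, he0] at h
    simpa using h
  -- C sqrt B at least one
  have hCB : 1 ≤ C * Real.sqrt B := by
    have h := hsprM e0 0
    simp only [sub_zero, add_zero, min_self, inner_zero_left, abs_zero, sq_abs] at h
    rw [he0] at h
    have h2 := (hframe e0).2
    rw [he0, one_pow, mul_one] at h2
    have h3 : ((1 / M : ℝ) * ∑ j, ⟪e0, x (ts j)⟫ ^ 2) ^ ((1:ℝ)/2) ≤ Real.sqrt B := by
      rw [← Real.sqrt_eq_rpow]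
      exact Real.sqrt_le_sqrt h2
    calc (1:ℝ) ≤ C * ((1 / M : ℝ) * ∑ j, ⟪e0, x (ts j)⟫ ^ 2) ^ ((1:ℝ)/2) := by simpa using h
      _ ≤ C * Real.sqrt B := mul_le_mul_of_nonneg_left h3 hC.le
  have hAB : A ≤ B := by
    have h1 := (hframe e0).1
    have h2 := (hframe e0).2
    rw [he0] at h1 h2
    simp only [one_pow, mul_one] at h1 h2
    linarith
  intro v
  refine ⟨⟨by rw [hParseval v]; exact (hframe v).1, by rw [hParseval v]; exact (hframe v).2⟩, ?_, ?_⟩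
  all_goals
    have hint2 : Integrable (fun t => ⟪v, x t⟫ ^ 2) μ := sq_int' hParseval v
    have hintabs : Integrable (fun t => |⟪v, x t⟫|) μ := abs_int' hmeas hParseval v
    set c : ℝ := ∫ t, |⟪v, x t⟫| ∂μ with hc_def
    set cM : ℝ := (1 / M : ℝ) * ∑ j, |⟪v, x (ts j)⟫| with hcM_def
    have hc0 : 0 ≤ c := integral_nonneg fun t => abs_nonneg _
    have hcM0 : 0 ≤ cM := by
      apply mul_nonneg (by positivity)
      exact Finset.sum_nonneg fun j _ => abs_nonneg _
    -- Cauchy-Schwarz, continuous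
    have hCScont : c ≤ ‖v‖ := by
      have hi1 : Integrable (fun t => ⟪v, x t⟫ ^ 2 - 2 * c * |⟪v, x t⟫|) μ :=
        hint2.sub (hintabs.const_mul (2 * c))
      have h0 : 0 ≤ ∫ t, (|⟪v, x t⟫| - c) ^ 2 ∂μ := integral_nonneg fun t => sq_nonneg _
      have hexp : (fun t => (|⟪v, x t⟫| - c) ^ 2)
          = fun t => (⟪v, x t⟫ ^ 2 - 2 * c * |⟪v, x t⟫|) + c ^ 2 := by
        funext t; rw [sub_sq, sq_abs]; ring
      rw [hexp, integral_add hi1 (integrable_const _),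
        integral_sub hint2 (hintabs.const_mul (2 * c)), integral_const_mul,
        hParseval v, integral_const] at h0
      simp only [probReal_univ, measure_univ, ENNReal.toReal_one, smul_eq_mul, one_mul] at h0
      have h2 : c ^ 2 ≤ ‖v‖ ^ 2 := by nlinarith [h0]
      calc c = Real.sqrt (c ^ 2) := (Real.sqrt_sq hc0).symm
        _ ≤ Real.sqrt (‖v‖ ^ 2) := Real.sqrt_le_sqrt h2
        _ = ‖v‖ := Real.sqrt_sq (norm_nonneg v)
    -- Cauchy-Schwarz + frame bound, discrete
    have hCSdisc : cM ≤ Real.sqrt B * ‖v‖ := by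
      have hsum : ∑ j, (|⟪v, x (ts j)⟫| - cM) ^ 2
          = ∑ j, ⟪v, x (ts j)⟫ ^ 2 - 2 * cM * ∑ j, |⟪v, x (ts j)⟫| + M * cM ^ 2 := by
        have h1 : ∀ j ∈ Finset.univ, (|⟪v, x (ts j)⟫| - cM) ^ 2
            = (⟪v, x (ts j)⟫ ^ 2 - 2 * cM * |⟪v, x (ts j)⟫|) + cM ^ 2 := fun j _ => by
          rw [sub_sq, sq_abs]; ring
        rw [Finset.sum_congr rfl h1, Finset.sum_add_distrib, Finset.sum_sub_distrib,
          ← Finset.mul_sum, Finset.sum_const, Finset.card_univ, Fintype.card_fin, nsmul_eq_mul]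
      have hMcM : ∑ j, |⟪v, x (ts j)⟫| = (M:ℝ) * cM := by
        rw [hcM_def]; field_simp
      have h0 : 0 ≤ (1 / M : ℝ) * ∑ j, (|⟪v, x (ts j)⟫| - cM) ^ 2 := by
        apply mul_nonneg (by positivity)
        exact Finset.sum_nonneg fun j _ => sq_nonneg _
      rw [hsum, hMcM] at h0
      have hexp2 : (1 / M : ℝ) * (∑ j, ⟪v, x (ts j)⟫ ^ 2 - 2 * cM * ((M:ℝ) * cM) + M * cM ^ 2)
          = (1 / M : ℝ) * ∑ j, ⟪v, x (ts j)⟫ ^ 2 - cM ^ 2 := by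
        field_simp; ring
      rw [hexp2] at h0
      have hfr := (hframe v).2
      have h2 : cM ^ 2 ≤ B * ‖v‖ ^ 2 := by linarith
      calc cM = Real.sqrt (cM ^ 2) := (Real.sqrt_sq hcM0).symm
        _ ≤ Real.sqrt (B * ‖v‖ ^ 2) := Real.sqrt_le_sqrt h2
        _ = Real.sqrt B * ‖v‖ := by
            rw [Real.sqrt_mul hB.le, Real.sqrt_sq (norm_nonneg v)]
    -- key lemmas
    have hcont : ‖v‖ ≤ 2 * κ ^ 2 * β * c :=
      cont_key N hN hdim μ x hmeas β κ hβ hκ hParseval hbd hspr v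
    have hdisc : ‖v‖ ≤ 2 * C ^ 2 * β * cM :=
      disc_key N hN hdim M hM (fun j => x (ts j)) β C hβ hC (fun j => hbd (ts j)) hsprM v
    have hs1pos : (0:ℝ) < 1 + A⁻¹ * β ^ 2 := by positivity
    have hs2pos : (0:ℝ) < 1 + β ^ 2 := by positivity
  -- lower bound
  · have hrA : A ^ ((1:ℝ)/2) = Real.sqrt A := (Real.sqrt_eq_rpow A).symm
    have hrB32 : B ^ (-(3:ℝ)/2) = (Real.sqrt B ^ 3)⁻¹ := by
      rw [show (-(3:ℝ)/2) = -((3:ℝ)/2) by norm_num, Real.rpow_neg hB.le]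
      congr 1
      rw [show ((3:ℝ)/2) = (1/2 : ℝ) * ((3:ℕ):ℝ) by norm_num, Real.rpow_mul hB.le,
        ← Real.sqrt_eq_rpow, Real.rpow_natCast]
    have hr132 : (1 + A⁻¹ * β ^ 2) ^ (-(3:ℝ)/2) = (Real.sqrt (1 + A⁻¹ * β ^ 2) ^ 3)⁻¹ := by
      rw [show (-(3:ℝ)/2) = -((3:ℝ)/2) by norm_num, Real.rpow_neg hs1pos.le]
      congr 1
      rw [show ((3:ℝ)/2) = (1/2 : ℝ) * ((3:ℕ):ℝ) by norm_num, Real.rpow_mul hs1pos.le,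
        ← Real.sqrt_eq_rpow, Real.rpow_natCast]
    have hrC3 : C ^ (-(3:ℝ)) = (C ^ 3)⁻¹ := by
      rw [show (-(3:ℝ)) = -((3:ℕ):ℝ) by norm_num, Real.rpow_neg hC.le, Real.rpow_natCast]
    rw [hrA, hrB32, hrC3, hr132]
    exact arith_low A B C β c cM ‖v‖ hA hB hC hβ hAB hCB hc0 hcM0 hCScont hdisc
  -- upper bound
  · have hrB : B ^ ((1:ℝ)/2) = Real.sqrt B := (Real.sqrt_eq_rpow B).symm
    have hr232 : (1 + β ^ 2) ^ ((3:ℝ)/2) = Real.sqrt (1 + β ^ 2) ^ 3 := by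
      rw [show ((3:ℝ)/2) = (1/2 : ℝ) * ((3:ℕ):ℝ) by norm_num, Real.rpow_mul hs2pos.le,
        ← Real.sqrt_eq_rpow, Real.rpow_natCast]
    rw [hrB, hr232]
    exact arith_up B κ β c cM ‖v‖ hB hκ hβ hκ1 hc0 hCSdisc hcont
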